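/- For every cr-free HOSC term Γ ⊢ M : τ, Γ-assignment ρ and continuation name c : τ: t ∈ Tr_HOS(C_{M,bra}^{ρ,c}) if and only if t ∈ Tr_HOSC(C_M^{ρ,c}) and t is O-bracketed. -/

import Mathlib

set_option maxHeartbeats 1000000
set_option autoImplicit true

namespace OGS

/-! ## Types -/

inductive Ty : Type
  | unit | int | bool
  | ref : Ty → Ty
  | prod : Ty → Ty → Ty
  | arrow : Ty → Ty → Ty
  | cont : Ty → Ty
  deriving DecidableEq

/-- Ground types ι ::= Unit | Int | Bool | ref ι -/
inductive Ty.Ground : Ty → Prop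
  | unit : Ty.Ground .unit
  | int : Ty.Ground .int
  | bool : Ty.Ground .bool
  | ref {ι : Ty} : Ty.Ground ι → Ty.Ground (.ref ι)

/-- GOSC types: reference types restricted to ground contents. -/
def Ty.isGOSC : Ty → Prop
  | .unit => True
  | .int => True
  | .bool => True
  | .ref ι => Ty.Ground ι
  | .prod a b => a.isGOSC ∧ b.isGOSC
  | .arrow a b => a.isGOSC ∧ b.isGOSC
  | .cont a => a.isGOSC

/-- HOS types: no cont constructor. -/
def Ty.isHOS : Ty → Prop
  | .unit => True
  | .int => True
  | .bool => True
  | .ref a => a.isHOS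
  | .prod a b => a.isHOS ∧ b.isHOS
  | .arrow a b => a.isHOS ∧ b.isHOS
  | .cont _ => False

/-- cont- and ref-free types -/
def Ty.crFree : Ty → Prop
  | .unit => True
  | .int => True
  | .bool => True
  | .ref _ => False
  | .prod a b => a.crFree ∧ b.crFree
  | .arrow a b => a.crFree ∧ b.crFree
  | .cont _ => False

inductive Frag | HOSC | GOSC | HOS | GOS
  deriving DecidableEq

def Frag.tyOK : Frag → Ty → Prop
  | .HOSC, _ => True
  | .GOSC, τ => τ.isGOSC
  | .HOS, τ => τ.isHOS
  | .GOS, τ => τ.isGOSC ∧ τ.isHOS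

/-- fragments featuring control (callcc/throw/cont) -/
def Frag.hasCont : Frag → Prop
  | .HOSC => True
  | .GOSC => True
  | .HOS => False
  | .GOS => False

/-! ## Names -/

structure FName where
  id : ℕ
  dom : Ty
  cod : Ty
  deriving DecidableEq

structure CName where
  id : ℕ
  ty : Ty
  deriving DecidableEq

inductive Name
  | fn : FName → Name
  | cn : CName → Name
  deriving DecidableEq

/-- the designated error function name errn : Unit → Unit -/
def errn : FName := ⟨0, .unit, .unit⟩

/-- the designated terminal continuation names tern_σ -/
def tern (σ : Ty) : CName := ⟨0, σ⟩

/-- ◦ = { tern_σ | σ } -/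
def circNames : Set Name := {n | ∃ σ : Ty, n = Name.cn (tern σ)}

/-! ## Terms -/

inductive ArithOp | add | sub | mul
inductive CmpOp | eq | lt

inductive Tm : Type
  | unit | tt | ff
  | int : ℤ → Tm
  | bvar : ℕ → Tm
  | errv : Tm                      -- the designated error variable err : Unit → Unit
  | loc : ℕ → Tm
  | fname : FName → Tm             -- extended syntax: function names as constants
  | hole : Tm                      -- the hole • of contexts / evaluation contexts
  | pair : Tm → Tm → Tm
  | fst : Tm → Tm
  | snd : Tm → Tm
  | lam : Ty → Tm → Tm             -- de Bruijn
  | fix : Ty → Ty → Tm → Tm        -- fix y (x:σ).M : σ→τ, bvar 0 = x, bvar 1 = y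
  | app : Tm → Tm → Tm
  | newref : Ty → Tm → Tm
  | deref : Tm → Tm
  | assign : Tm → Tm → Tm
  | ifte : Tm → Tm → Tm → Tm
  | arith : ArithOp → Tm → Tm → Tm
  | cmp : CmpOp → Tm → Tm → Tm
  | refeq : Tm → Tm → Tm
  | callcc : Ty → Tm → Tm          -- callcc_τ(x.M), binds x
  | throw : Ty → Tm → Tm → Tm      -- throw_τ M to N
  | contV : Ty → Ty → Tm → Tm      -- cont_τ(K), K : τ ⇒ σ
  | contE : Ty → Tm → CName → Tm   -- extended: cont_τ(K, c)

inductive IsVal : Tm → Prop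
  | unit : IsVal .unit
  | tt : IsVal .tt
  | ff : IsVal .ff
  | int (n : ℤ) : IsVal (.int n)
  | bvar (i : ℕ) : IsVal (.bvar i)
  | errv : IsVal .errv
  | loc (ℓ : ℕ) : IsVal (.loc ℓ)
  | fname (f : FName) : IsVal (.fname f)
  | pair {u v : Tm} : IsVal u → IsVal v → IsVal (.pair u v)
  | lam (τ : Ty) (M : Tm) : IsVal (.lam τ M)
  | fix (σ τ : Ty) (M : Tm) : IsVal (.fix σ τ M)
  | contV (τ σ : Ty) (K : Tm) : IsVal (.contV τ σ K)
  | contE (τ : Ty) (K : Tm) (c : CName) : IsVal (.contE τ K c)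

/-- substitution of a (closed) term `V` for de Bruijn index `k` -/
def Tm.subst : Tm → ℕ → Tm → Tm
  | .bvar i, k, V => if i = k then V else if k < i then .bvar (i - 1) else .bvar i
  | .pair a b, k, V => .pair (a.subst k V) (b.subst k V)
  | .fst a, k, V => .fst (a.subst k V)
  | .snd a, k, V => .snd (a.subst k V)
  | .lam τ a, k, V => .lam τ (a.subst (k+1) V)
  | .fix σ τ a, k, V => .fix σ τ (a.subst (k+2) V)
  | .app a b, k, V => .app (a.subst k V) (b.subst k V)
  | .newref τ a, k, V => .newref τ (a.subst k V)
  | .deref a, k, V => .deref (a.subst k V)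
  | .assign a b, k, V => .assign (a.subst k V) (b.subst k V)
  | .ifte a b c, k, V => .ifte (a.subst k V) (b.subst k V) (c.subst k V)
  | .arith op a b, k, V => .arith op (a.subst k V) (b.subst k V)
  | .cmp op a b, k, V => .cmp op (a.subst k V) (b.subst k V)
  | .refeq a b, k, V => .refeq (a.subst k V) (b.subst k V)
  | .callcc τ a, k, V => .callcc τ (a.subst (k+1) V)
  | .throw τ a b, k, V => .throw τ (a.subst k V) (b.subst k V)
  | .contV τ σ K, k, V => .contV τ σ (K.subst k V)
  | .contE τ K c, k, V => .contE τ (K.subst k V) c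
  | t, _, _ => t

/-- simultaneous substitution of a list of closed values for the free variables 0,1,2,… -/
def Tm.msubst (M : Tm) (γ : List Tm) : Tm := γ.foldl (fun N V => N.subst 0 V) M

/-- filling the hole of a context/evaluation context (capturing; does not descend
into the evaluation-context argument of continuation constants, whose hole is their own) -/
def Tm.fill : Tm → Tm → Tm
  | .hole, M => M
  | .pair a b, M => .pair (a.fill M) (b.fill M)
  | .fst a, M => .fst (a.fill M)
  | .snd a, M => .snd (a.fill M)
  | .lam τ a, M => .lam τ (a.fill M)
  | .fix σ τ a, M => .fix σ τ (a.fill M)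
  | .app a b, M => .app (a.fill M) (b.fill M)
  | .newref τ a, M => .newref τ (a.fill M)
  | .deref a, M => .deref (a.fill M)
  | .assign a b, M => .assign (a.fill M) (b.fill M)
  | .ifte a b c, M => .ifte (a.fill M) (b.fill M) (c.fill M)
  | .arith op a b, M => .arith op (a.fill M) (b.fill M)
  | .cmp op a b, M => .cmp op (a.fill M) (b.fill M)
  | .refeq a b, M => .refeq (a.fill M) (b.fill M)
  | .callcc τ a, M => .callcc τ (a.fill M)
  | .throw τ a b, M => .throw τ (a.fill M) (b.fill M)
  | t, _ => t

/-- list of all subterm occurrences -/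
def Tm.subterms : Tm → List Tm
  | .pair a b => .pair a b :: (a.subterms ++ b.subterms)
  | .fst a => .fst a :: a.subterms
  | .snd a => .snd a :: a.subterms
  | .lam τ a => .lam τ a :: a.subterms
  | .fix σ τ a => .fix σ τ a :: a.subterms
  | .app a b => .app a b :: (a.subterms ++ b.subterms)
  | .newref τ a => .newref τ a :: a.subterms
  | .deref a => .deref a :: a.subterms
  | .assign a b => .assign a b :: (a.subterms ++ b.subterms)
  | .ifte a b c => .ifte a b c :: (a.subterms ++ b.subterms ++ c.subterms)
  | .arith op a b => .arith op a b :: (a.subterms ++ b.subterms)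
  | .cmp op a b => .cmp op a b :: (a.subterms ++ b.subterms)
  | .refeq a b => .refeq a b :: (a.subterms ++ b.subterms)
  | .callcc τ a => .callcc τ a :: a.subterms
  | .throw τ a b => .throw τ a b :: (a.subterms ++ b.subterms)
  | .contV τ σ K => .contV τ σ K :: K.subterms
  | .contE τ K c => .contE τ K c :: K.subterms
  | t => [t]

/-- number of occurrences of the (ambient) hole, not counting holes belonging
to continuation constants -/
def Tm.holeCount : Tm → ℕ
  | .hole => 1
  | .pair a b => a.holeCount + b.holeCount
  | .fst a => a.holeCount
  | .snd a => a.holeCount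
  | .lam _ a => a.holeCount
  | .fix _ _ a => a.holeCount
  | .app a b => a.holeCount + b.holeCount
  | .newref _ a => a.holeCount
  | .deref a => a.holeCount
  | .assign a b => a.holeCount + b.holeCount
  | .ifte a b c => a.holeCount + b.holeCount + c.holeCount
  | .arith _ a b => a.holeCount + b.holeCount
  | .cmp _ a b => a.holeCount + b.holeCount
  | .refeq a b => a.holeCount + b.holeCount
  | .callcc _ a => a.holeCount
  | .throw _ a b => a.holeCount + b.holeCount
  | _ => 0

/-- ν(M): the set of (function and continuation) names occurring in a term -/
def Tm.names (M : Tm) : Set Name :=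
  {n | (∃ f, n = Name.fn f ∧ Tm.fname f ∈ M.subterms) ∨
       (∃ c, n = Name.cn c ∧ ∃ τ K, Tm.contE τ K c ∈ M.subterms)}

/-- surface (non-extended) syntax: no function-name constants, no cont_τ(K,c) -/
def Tm.extFree (M : Tm) : Prop :=
  (∀ f, Tm.fname f ∉ M.subterms) ∧ (∀ τ K c, Tm.contE τ K c ∉ M.subterms)

/-- no occurrence of a continuation constant cont_τ(K) -/
def Tm.contVFree (M : Tm) : Prop := ∀ τ σ K, Tm.contV τ σ K ∉ M.subterms

def Tm.locFree (M : Tm) : Prop := ∀ ℓ, Tm.loc ℓ ∉ M.subterms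

/-- syntactic conditions of cr-freeness: no continuation constants and no locations -/
def Tm.crFreeSyn (M : Tm) : Prop :=
  (∀ τ σ K, Tm.contV τ σ K ∉ M.subterms) ∧
  (∀ τ K c, Tm.contE τ K c ∉ M.subterms) ∧
  (∀ ℓ, Tm.loc ℓ ∉ M.subterms)

/-- head-constructor check for membership in a fragment's (surface) syntax -/
def Tm.headOK (x : Frag) : Tm → Prop
  | .lam τ _ => x.tyOK τ
  | .fix σ τ _ => x.tyOK (Ty.arrow σ τ)
  | .newref τ _ => x.tyOK (Ty.ref τ)
  | .callcc τ _ => x.hasCont ∧ x.tyOK (Ty.cont τ)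
  | .throw τ _ _ => x.hasCont ∧ x.tyOK τ
  | .contV τ σ _ => x.hasCont ∧ x.tyOK (Ty.cont τ) ∧ x.tyOK σ
  | .contE _ _ _ => False
  | .fname _ => False
  | _ => True

/-- `M` is built from the (surface) syntax of fragment `x` -/
def Tm.inFrag (x : Frag) (M : Tm) : Prop := ∀ N ∈ M.subterms, N.headOK x

/-- head-constructor check for the name-extended syntax of a fragment -/
def Tm.headOKX (x : Frag) : Tm → Prop
  | .lam τ _ => x.tyOK τ
  | .fix σ τ _ => x.tyOK (Ty.arrow σ τ)
  | .newref τ _ => x.tyOK (Ty.ref τ)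
  | .callcc τ _ => x.hasCont ∧ x.tyOK (Ty.cont τ)
  | .throw τ _ _ => x.hasCont ∧ x.tyOK τ
  | .contV τ σ _ => x.hasCont ∧ x.tyOK (Ty.cont τ) ∧ x.tyOK σ
  | .contE τ _ c => x.hasCont ∧ x.tyOK (Ty.cont τ) ∧ x.tyOK c.ty
  | .fname f => x.tyOK (Ty.arrow f.dom f.cod)
  | _ => True

/-- `M` is built from the name-extended syntax of fragment `x` -/
def Tm.inFragX (x : Frag) (M : Tm) : Prop := ∀ N ∈ M.subterms, N.headOKX x

/-! ## Evaluation contexts -/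

inductive IsECtx : Tm → Prop
  | hole : IsECtx .hole
  | pairV {v K : Tm} : IsVal v → IsECtx K → IsECtx (.pair v K)
  | pairK {K M : Tm} : IsECtx K → IsECtx (.pair K M)
  | fst {K : Tm} : IsECtx K → IsECtx (.fst K)
  | snd {K : Tm} : IsECtx K → IsECtx (.snd K)
  | appV {v K : Tm} : IsVal v → IsECtx K → IsECtx (.app v K)
  | appK {K M : Tm} : IsECtx K → IsECtx (.app K M)
  | newref {τ : Ty} {K : Tm} : IsECtx K → IsECtx (.newref τ K)
  | deref {K : Tm} : IsECtx K → IsECtx (.deref K)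
  | assignV {v K : Tm} : IsVal v → IsECtx K → IsECtx (.assign v K)
  | assignK {K M : Tm} : IsECtx K → IsECtx (.assign K M)
  | ifte {K M N : Tm} : IsECtx K → IsECtx (.ifte K M N)
  | arithK {op} {K M : Tm} : IsECtx K → IsECtx (.arith op K M)
  | arithV {op} {v K : Tm} : IsVal v → IsECtx K → IsECtx (.arith op v K)
  | cmpK {op} {K M : Tm} : IsECtx K → IsECtx (.cmp op K M)
  | cmpV {op} {v K : Tm} : IsVal v → IsECtx K → IsECtx (.cmp op v K)
  | refeqK {K M : Tm} : IsECtx K → IsECtx (.refeq K M)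
  | refeqV {v K : Tm} : IsVal v → IsECtx K → IsECtx (.refeq v K)
  | throwV {τ : Ty} {v K : Tm} : IsVal v → IsECtx K → IsECtx (.throw τ v K)
  | throwK {τ : Ty} {K M : Tm} : IsECtx K → IsECtx (.throw τ K M)

/-! ## Typing -/

abbrev LocTy := ℕ → Option Ty
abbrev TyCtx := List Ty

def emptyLocTy : LocTy := fun _ => none

/-- Typing judgment `Typed Σ Δ hσ M τ`: locations typed by `Σ`, de Bruijn context `Δ`,
`hσ` is the type of the hole (if a hole is permitted). -/
inductive Typed : LocTy → TyCtx → Option Ty → Tm → Ty → Prop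
  | unit : Typed St Δ hσ .unit .unit
  | tt : Typed St Δ hσ .tt .bool
  | ff : Typed St Δ hσ .ff .bool
  | int (n : ℤ) : Typed St Δ hσ (.int n) .int
  | bvar {i τ} : Δ[i]? = some τ → Typed St Δ hσ (.bvar i) τ
  | errv : Typed St Δ hσ .errv (.arrow .unit .unit)
  | loc {ℓ τ} : St ℓ = some τ → Typed St Δ hσ (.loc ℓ) (.ref τ)
  | fname (f : FName) : Typed St Δ hσ (.fname f) (.arrow f.dom f.cod)
  | hole : Typed St Δ (some τ) .hole τ
  | pair : Typed St Δ hσ a σ → Typed St Δ hσ b τ → Typed St Δ hσ (.pair a b) (.prod σ τ)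
  | fst : Typed St Δ hσ a (.prod σ τ) → Typed St Δ hσ (.fst a) σ
  | snd : Typed St Δ hσ a (.prod σ τ) → Typed St Δ hσ (.snd a) τ
  | lam : Typed St (σ :: Δ) hσ M τ → Typed St Δ hσ (.lam σ M) (.arrow σ τ)
  | fix : Typed St (σ :: Ty.arrow σ τ :: Δ) hσ M τ → Typed St Δ hσ (.fix σ τ M) (.arrow σ τ)
  | app : Typed St Δ hσ a (.arrow σ τ) → Typed St Δ hσ b σ → Typed St Δ hσ (.app a b) τ
  | newref : Typed St Δ hσ a τ → Typed St Δ hσ (.newref τ a) (.ref τ)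
  | deref : Typed St Δ hσ a (.ref τ) → Typed St Δ hσ (.deref a) τ
  | assign : Typed St Δ hσ a (.ref τ) → Typed St Δ hσ b τ → Typed St Δ hσ (.assign a b) .unit
  | ifte : Typed St Δ hσ a .bool → Typed St Δ hσ b τ → Typed St Δ hσ c τ →
      Typed St Δ hσ (.ifte a b c) τ
  | arith : Typed St Δ hσ a .int → Typed St Δ hσ b .int → Typed St Δ hσ (.arith op a b) .int
  | cmp : Typed St Δ hσ a .int → Typed St Δ hσ b .int → Typed St Δ hσ (.cmp op a b) .bool
  | refeq : Typed St Δ hσ a (.ref τ) → Typed St Δ hσ b (.ref τ) →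
      Typed St Δ hσ (.refeq a b) .bool
  | callcc : Typed St (Ty.cont τ :: Δ) hσ M τ → Typed St Δ hσ (.callcc τ M) τ
  | throw : Typed St Δ hσ a σ → Typed St Δ hσ b (.cont σ) → Typed St Δ hσ (.throw τ a b) τ
  | contV : IsECtx K → Typed St Δ (some τ) K σ → Typed St Δ hσ (.contV τ σ K) (.cont τ)
  | contE {c : CName} : IsECtx K → Typed St Δ (some τ) K c.ty →
      Typed St Δ hσ (.contE τ K c) (.cont τ)

/-! ## Heaps and operational semantics -/

abbrev Heap := ℕ → Option Tm

def Heap.empty : Heap := fun _ => none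
def Heap.upd (h : Heap) (ℓ : ℕ) (V : Tm) : Heap := fun ℓ' => if ℓ' = ℓ then some V else h ℓ'

def HeapTyped (St : LocTy) (h : Heap) : Prop :=
  ∀ ℓ τ, St ℓ = some τ → ∃ V, h ℓ = some V ∧ IsVal V ∧ Typed St [] none V τ

def Heap.inFrag (x : Frag) (h : Heap) : Prop := ∀ ℓ V, h ℓ = some V → Tm.inFrag x V
def Heap.inFragX (x : Frag) (h : Heap) : Prop := ∀ ℓ V, h ℓ = some V → Tm.inFragX x V

def ArithOp.eval : ArithOp → ℤ → ℤ → ℤ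
  | .add, m, n => m + n
  | .sub, m, n => m - n
  | .mul, m, n => m * n

def CmpOp.eval : CmpOp → ℤ → ℤ → Bool
  | .eq, m, n => decide (m = n)
  | .lt, m, n => decide (m < n)

def Tm.ofBool (b : Bool) : Tm := if b then .tt else .ff

/-- head reduction rules (the rules of Figure 2 not involving continuations) -/
inductive RedBase : Tm → Heap → Tm → Heap → Prop
  | beta {σ : Ty} {M V : Tm} {h : Heap} : IsVal V →
      RedBase (.app (.lam σ M) V) h (M.subst 0 V) h
  | fixbeta {σ τ : Ty} {M V : Tm} {h : Heap} : IsVal V →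
      RedBase (.app (.fix σ τ M) V) h ((M.subst 0 V).subst 0 (.fix σ τ M)) h
  | fst {v₁ v₂ : Tm} {h : Heap} : IsVal v₁ → IsVal v₂ → RedBase (.fst (.pair v₁ v₂)) h v₁ h
  | snd {v₁ v₂ : Tm} {h : Heap} : IsVal v₁ → IsVal v₂ → RedBase (.snd (.pair v₁ v₂)) h v₂ h
  | iftt {M N : Tm} {h : Heap} : RedBase (.ifte .tt M N) h M h
  | ifff {M N : Tm} {h : Heap} : RedBase (.ifte .ff M N) h N h
  | arith {op} {m n : ℤ} {h : Heap} :
      RedBase (.arith op (.int m) (.int n)) h (.int (op.eval m n)) h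
  | cmp {op} {m n : ℤ} {h : Heap} :
      RedBase (.cmp op (.int m) (.int n)) h (Tm.ofBool (op.eval m n)) h
  | refeq {ℓ ℓ' : ℕ} {h : Heap} :
      RedBase (.refeq (.loc ℓ) (.loc ℓ')) h (Tm.ofBool (decide (ℓ = ℓ'))) h
  | deref {ℓ : ℕ} {V : Tm} {h : Heap} : h ℓ = some V → RedBase (.deref (.loc ℓ)) h V h
  | newref {τ : Ty} {V : Tm} {ℓ : ℕ} {h : Heap} : IsVal V → h ℓ = none →
      RedBase (.newref τ V) h (.loc ℓ) (Heap.upd h ℓ V)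
  | assign {ℓ : ℕ} {V : Tm} {h : Heap} : IsVal V → h ℓ ≠ none →
      RedBase (.assign (.loc ℓ) V) h .unit (Heap.upd h ℓ V)

/-- the operational reduction (M,h) → (M',h') of HOSC (Figure 2) -/
inductive Red : Tm → Heap → Tm → Heap → Prop
  | base {K M M' : Tm} {h h' : Heap} : IsECtx K → RedBase M h M' h' →
      Red (K.fill M) h (K.fill M') h'
  | callcc {τ σ : Ty} {K M : Tm} {h : Heap} : IsECtx K →
      Red (K.fill (.callcc τ M)) h (K.fill (M.subst 0 (.contV τ σ K))) h
  | throw {τ σ σ' : Ty} {K K' V : Tm} {h : Heap} : IsECtx K → IsECtx K' → IsVal V →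
      Red (K.fill (.throw τ V (.contV σ σ' K'))) h (K'.fill V) h

def RedStar : Tm × Heap → Tm × Heap → Prop :=
  Relation.ReflTransGen (fun p q => Red p.1 p.2 q.1 q.2)

/-- (M,h) ⇓_ter -/
def TerObs (M : Tm) (h : Heap) : Prop := ∃ V h', RedStar (M, h) (V, h') ∧ IsVal V

/-- (M,h) ⇓_err : reaching K[err()] -/
def ErrObs (M : Tm) (h : Heap) : Prop :=
  ∃ K h', IsECtx K ∧ RedStar (M, h) (K.fill (.app .errv .unit), h')

/-- the extended operational semantics (M,c,h) → (M',c',h') with continuation names -/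
inductive ERed : Tm → CName → Heap → Tm → CName → Heap → Prop
  | base {K M M' : Tm} {c : CName} {h h' : Heap} : IsECtx K → RedBase M h M' h' →
      ERed (K.fill M) c h (K.fill M') c h'
  | callcc {τ : Ty} {K M : Tm} {c : CName} {h : Heap} : IsECtx K →
      ERed (K.fill (.callcc τ M)) c h (K.fill (M.subst 0 (.contE τ K c))) c h
  | throw {τ σ : Ty} {K K' V : Tm} {c c' : CName} {h : Heap} :
      IsECtx K → IsECtx K' → IsVal V →
      ERed (K.fill (.throw τ V (.contE σ K' c'))) c h (K'.fill V) c' h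

/-! ## Contextual and CIU approximation -/

inductive TKind | ter | err

def TKind.obs : TKind → Tm → Heap → Prop
  | .ter => TerObs
  | .err => ErrObs

def Tm.noErr (M : Tm) : Prop := Tm.errv ∉ M.subterms

/-- contextual approximation ≲_y^x : testing with contexts built from x-syntax,
observing y (for y = ter the context may not use the error variable). -/
def CtxApprox (x : Frag) (y : TKind) (Γ : TyCtx) (τ : Ty) (M₁ M₂ : Tm) : Prop :=
  ∀ C τ', Tm.inFrag x C → C.holeCount = 1 → (y = .ter → C.noErr) →
    (∀ N, Typed emptyLocTy Γ none N τ → Typed emptyLocTy [] none (C.fill N) τ') →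
    y.obs (C.fill M₁) Heap.empty → y.obs (C.fill M₂) Heap.empty

/-- γ is a substitution of closed values for the variables in Γ -/
def SubstTyped (St : LocTy) (γ : List Tm) (Γ : TyCtx) : Prop :=
  List.Forall₂ (fun V σ => IsVal V ∧ Typed St [] none V σ) γ Γ

/-- CIU approximation ≲_{ciu,y}^x -/
def CIU (x : Frag) (y : TKind) (Γ : TyCtx) (τ : Ty) (M₁ M₂ : Tm) : Prop :=
  ∀ St h K γ τ',
    HeapTyped St h → Heap.inFrag x h → (y = .ter → ∀ ℓ V, h ℓ = some V → Tm.noErr V) →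
    IsECtx K → Tm.inFrag x K → (y = .ter → K.noErr) → Typed St [] (some τ) K τ' →
    SubstTyped St γ Γ → (∀ V ∈ γ, Tm.inFrag x V) → (y = .ter → ∀ V ∈ γ, Tm.noErr V) →
    y.obs (K.fill (M₁.msubst γ)) h → y.obs (K.fill (M₂.msubst γ)) h

/-- cr-free terms -/
structure CrFreeTm (Γ : TyCtx) (M : Tm) (τ : Ty) : Prop where
  typed : Typed emptyLocTy Γ none M τ
  synt : M.crFreeSyn
  noName : ∀ f, Tm.fname f ∉ M.subterms
  noErrv : M.noErr
  bndΓ : ∀ σ ∈ Γ, σ.crFree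
  bndτ : τ.crFree

/-! ## Abstract values, actions, traces -/

inductive AVal
  | unit | tt | ff
  | int : ℤ → AVal
  | fn : FName → AVal
  | pair : AVal → AVal → AVal

def AVal.toTm : AVal → Tm
  | .unit => .unit
  | .tt => .tt
  | .ff => .ff
  | .int n => .int n
  | .fn f => .fname f
  | .pair a b => .pair a.toTm b.toTm

def AVal.names : AVal → Set Name
  | .fn f => {Name.fn f}
  | .pair a b => a.names ∪ b.names
  | _ => ∅

/-- each name occurs at most once -/
def AVal.linear : AVal → Prop
  | .pair a b => a.linear ∧ b.linear ∧ a.names ∩ b.names = ∅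
  | _ => True

inductive AVal.HasTy : AVal → Ty → Prop
  | unit : AVal.HasTy .unit .unit
  | tt : AVal.HasTy .tt .bool
  | ff : AVal.HasTy .ff .bool
  | int (n : ℤ) : AVal.HasTy (.int n) .int
  | fn (f : FName) : AVal.HasTy (.fn f) (.arrow f.dom f.cod)
  | pair {a b σ τ} : AVal.HasTy a σ → AVal.HasTy b τ → AVal.HasTy (.pair a b) (.prod σ τ)

abbrev FEnv := FName → Option Tm
abbrev KEnv := CName → Option Tm
abbrev XiEnv := CName → Option (Option CName)

/-- decomposition of a closed value into an abstract value pattern and a matching -/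
inductive Decomp : Tm → Ty → AVal → FEnv → Prop
  | unit : Decomp .unit .unit .unit (fun _ => none)
  | tt : Decomp .tt .bool .tt (fun _ => none)
  | ff : Decomp .ff .bool .ff (fun _ => none)
  | int (n : ℤ) : Decomp (.int n) .int (.int n) (fun _ => none)
  | fn {V : Tm} {f : FName} : IsVal V →
      Decomp V (.arrow f.dom f.cod) (.fn f) (Function.update (fun _ => none) f (some V))
  | pair {u v : Tm} {σ τ : Ty} {A B : AVal} {ga gb : FEnv} :
      Decomp u σ A ga → Decomp v τ B gb → (∀ f, ga f = none ∨ gb f = none) →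
      Decomp (.pair u v) (.prod σ τ) (.pair A B) (fun f => (ga f) <|> (gb f))

inductive Act
  | pa : CName → AVal → Act
  | pq : FName → AVal → CName → Act
  | oa : CName → AVal → Act
  | oq : FName → AVal → CName → Act

def Act.isP : Act → Bool
  | .pa _ _ => true
  | .pq _ _ _ => true
  | .oa _ _ => false
  | .oq _ _ _ => false

def Act.dual : Act → Act
  | .pa c A => .oa c A
  | .pq f A c => .oq f A c
  | .oa c A => .pa c A
  | .oq f A c => .pq f A c

/-- names introduced by an action -/
def Act.intro : Act → Set Name
  | .pa _ A => A.names
  | .oa _ A => A.names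
  | .pq _ A c => A.names ∪ {Name.cn c}
  | .oq _ A c => A.names ∪ {Name.cn c}

/-- the name used to communicate -/
def Act.subject : Act → Name
  | .pa c _ => Name.cn c
  | .oa c _ => Name.cn c
  | .pq f _ _ => Name.fn f
  | .oq f _ _ => Name.fn f

def Act.names (a : Act) : Set Name := {a.subject} ∪ a.intro

def Act.wf : Act → Prop
  | .pa _ A => A.linear
  | .oa _ A => A.linear
  | .pq _ A c => A.linear ∧ Name.cn c ∉ A.names
  | .oq _ A c => A.linear ∧ Name.cn c ∉ A.names

def traceNames (t : List Act) : Set Name := {n | ∃ a ∈ t, n ∈ a.names}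

def introducedBefore (pol : Bool) (t : List Act) (i : ℕ) : Set Name :=
  {n | ∃ j, ∃ hj : j < t.length, j < i ∧ (t[j]'hj).isP = pol ∧ n ∈ (t[j]'hj).intro}

/-- (N_O, N_P)-traces -/
def IsTrace (NO NP : Set Name) (t : List Act) : Prop :=
  List.Chain' (fun a b => a.isP ≠ b.isP) t ∧
  (∀ a ∈ t, a.wf) ∧
  (∀ a ∈ t, a.intro ∩ (NO ∪ NP) = ∅) ∧
  (∀ i, ∀ hi : i < t.length, ∀ j, ∀ hj : j < t.length, i ≠ j →
      (t[i]'hi).intro ∩ (t[j]'hj).intro = ∅) ∧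
  (∀ i, ∀ hi : i < t.length,
      (t[i]'hi).subject ∈
        (if (t[i]'hi).isP then NO else NP) ∪ introducedBefore (!(t[i]'hi).isP) t i)

/-! ## The LTS -/

structure ACfg where
  tm : Tm
  cur : CName
  gf : FEnv
  gc : KEnv
  xi : XiEnv
  phi : Set Name
  hp : Heap
  Fm : Name → Option (Set Name)

structure PCfg where
  gf : FEnv
  gc : KEnv
  xi : XiEnv
  phi : Set Name
  hp : Heap
  Fm : Name → Option (Set Name)
  avail : Set Name
  topc : Option CName

inductive Cfg
  | act : ACfg → Cfg
  | pas : PCfg → Cfg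

def joinF (a b : FEnv) : FEnv := fun f => (a f) <|> (b f)

open Classical in
noncomputable def extendF (F : Name → Option (Set Name)) (s av : Set Name) :
    Name → Option (Set Name) :=
  fun n => if n ∈ s then some av else F n

/-- The (unified) LTS. With `vis = bra = false` this is the HOSC[HOSC] LTS;
`vis = true` adds the O-visibility restriction (GOSC[HOSC]);
`bra = true` adds the O-bracketing restriction (HOS[HOSC]); both give GOS[HOSC]. -/
inductive Step : Bool → Bool → Cfg → Option Act → Cfg → Prop
  | tau {vis bra : Bool} {M N : Tm} {c c' : CName} {gf : FEnv} {gc : KEnv} {xi : XiEnv}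
      {phi : Set Name} {h h' : Heap} {F : Name → Option (Set Name)} :
      ERed M c h N c' h' →
      Step vis bra (.act ⟨M, c, gf, gc, xi, phi, h, F⟩) none
        (.act ⟨N, c', gf, gc, xi, phi, h', F⟩)
  | pa {vis bra : Bool} {V : Tm} {c : CName} {A : AVal} {g' : FEnv} {gf : FEnv} {gc : KEnv}
      {xi : XiEnv} {phi : Set Name} {h : Heap} {F : Name → Option (Set Name)} :
      IsVal V → Decomp V c.ty A g' → A.linear → A.names ∩ phi = ∅ →
      Step vis bra (.act ⟨V, c, gf, gc, xi, phi, h, F⟩) (some (.pa c A))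
        (.pas ⟨joinF gf g', gc, xi, phi ∪ A.names, h, F,
               (F (Name.cn c)).getD ∅ ∪ A.names, Option.join (xi c)⟩)
  | pq {vis bra : Bool} {K V : Tm} {f : FName} {A : AVal} {c c' : CName} {g' : FEnv}
      {gf : FEnv} {gc : KEnv} {xi : XiEnv} {phi : Set Name} {h : Heap}
      {F : Name → Option (Set Name)} :
      IsECtx K → IsVal V → Decomp V f.dom A g' → A.linear →
      c'.ty = f.cod → (A.names ∪ {Name.cn c'}) ∩ phi = ∅ → Name.cn c' ∉ A.names →
      Step vis bra (.act ⟨K.fill (.app (.fname f) V), c, gf, gc, xi, phi, h, F⟩)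
        (some (.pq f A c'))
        (.pas ⟨joinF gf g', Function.update gc c' (some K),
               Function.update xi c' (some (some c)),
               phi ∪ A.names ∪ {Name.cn c'}, h, F,
               (F (Name.fn f)).getD ∅ ∪ A.names ∪ {Name.cn c'}, some c'⟩)
  | oa {vis bra : Bool} {K : Tm} {c c' : CName} {A : AVal} {gf : FEnv} {gc : KEnv}
      {xi : XiEnv} {phi : Set Name} {h : Heap} {F : Name → Option (Set Name)}
      {av : Set Name} {tc : Option CName} :
      AVal.HasTy A c.ty → A.linear → A.names ∩ phi = ∅ →
      gc c = some K → xi c = some (some c') →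
      (vis = true → Name.cn c ∈ av) → (bra = true → tc = some c) →
      Step vis bra (.pas ⟨gf, gc, xi, phi, h, F, av, tc⟩) (some (.oa c A))
        (.act ⟨K.fill A.toTm, c', gf, gc, xi, phi ∪ A.names, h, extendF F A.names av⟩)
  | oq {vis bra : Bool} {V : Tm} {f : FName} {A : AVal} {c : CName} {gf : FEnv} {gc : KEnv}
      {xi : XiEnv} {phi : Set Name} {h : Heap} {F : Name → Option (Set Name)}
      {av : Set Name} {tc : Option CName} :
      AVal.HasTy A f.dom → A.linear → c.ty = f.cod →
      (A.names ∪ {Name.cn c}) ∩ phi = ∅ → Name.cn c ∉ A.names →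
      gf f = some V →
      (vis = true → Name.fn f ∈ av) →
      Step vis bra (.pas ⟨gf, gc, xi, phi, h, F, av, tc⟩) (some (.oq f A c))
        (.act ⟨.app V A.toTm, c, gf, gc, Function.update xi c (some tc),
               phi ∪ A.names ∪ {Name.cn c}, h, extendF F (A.names ∪ {Name.cn c}) av⟩)

inductive Steps (vis bra : Bool) : Cfg → List Act → Cfg → Prop
  | nil {C : Cfg} : Steps vis bra C [] C
  | tau {C C' C'' : Cfg} {t : List Act} :
      Step vis bra C none C' → Steps vis bra C' t C'' → Steps vis bra C t C''
  | cons {C C' C'' : Cfg} {a : Act} {t : List Act} :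
      Step vis bra C (some a) C' → Steps vis bra C' t C'' → Steps vis bra C (a :: t) C''

def Traces (vis bra : Bool) (C : Cfg) : Set (List Act) := {t | ∃ C', Steps vis bra C t C'}

/-! ## Initial configurations and trace semantics -/

def AssignTyped (ρ : List AVal) (Γ : TyCtx) : Prop :=
  List.Forall₂ (fun A σ => AVal.HasTy A σ ∧ AVal.linear A) ρ Γ ∧
  List.Pairwise (fun A B => A.names ∩ B.names = ∅) ρ

def assignNames (ρ : List AVal) : Set Name := {n | ∃ A ∈ ρ, n ∈ A.names}

def initTm (M : Tm) (ρ : List AVal) : Tm := M.msubst (ρ.map AVal.toTm)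

def emptyF : Name → Option (Set Name) := fun _ => none

/-- C_M^{ρ,c} = ⟨M{ρ}, c, ∅, ∅, ν(ρ)∪{c}, ∅⟩ -/
def cfgInit (M : Tm) (ρ : List AVal) (c : CName) : Cfg :=
  .act ⟨initTm M ρ, c, (fun _ => none), (fun _ => none), (fun _ => none),
        assignNames ρ ∪ {Name.cn c}, Heap.empty, emptyF⟩

/-- C_{M,bra}^{ρ,c}: ξ initialized with [c ↦ ⊥] -/
def cfgInitBra (M : Tm) (ρ : List AVal) (c : CName) : Cfg :=
  .act ⟨initTm M ρ, c, (fun _ => none), (fun _ => none),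
        Function.update (fun _ => none : XiEnv) c (some none),
        assignNames ρ ∪ {Name.cn c}, Heap.empty, emptyF⟩

def TrSemHOSC (Γ : TyCtx) (τ : Ty) (M : Tm) : Set ((List AVal × CName) × List Act) :=
  {p | AssignTyped p.1.1 Γ ∧ p.1.2.ty = τ ∧ p.2 ∈ Traces false false (cfgInit M p.1.1 p.1.2)}

def TrSemGOSC (Γ : TyCtx) (τ : Ty) (M : Tm) : Set ((List AVal × CName) × List Act) :=
  {p | AssignTyped p.1.1 Γ ∧ p.1.2.ty = τ ∧ p.2 ∈ Traces true false (cfgInit M p.1.1 p.1.2)}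

def TrSemHOS (Γ : TyCtx) (τ : Ty) (M : Tm) : Set ((List AVal × CName) × List Act) :=
  {p | AssignTyped p.1.1 Γ ∧ p.1.2.ty = τ ∧ p.2 ∈ Traces false true (cfgInitBra M p.1.1 p.1.2)}

def TrSemGOS (Γ : TyCtx) (τ : Ty) (M : Tm) : Set ((List AVal × CName) × List Act) :=
  {p | AssignTyped p.1.1 Γ ∧ p.1.2.ty = τ ∧ p.2 ∈ Traces true true (cfgInitBra M p.1.1 p.1.2)}

/-! ## The ◦-translation and context configurations -/

/-- replace err by errn and each cont_τ(K) (with K : τ ⇒ σ) by cont_τ(K, ◦_σ) -/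
def Tm.toCirc : Tm → Tm
  | .errv => .fname errn
  | .contV τ σ K => .contE τ K.toCirc (tern σ)
  | .contE τ K c => .contE τ K.toCirc c
  | .pair a b => .pair a.toCirc b.toCirc
  | .fst a => .fst a.toCirc
  | .snd a => .snd a.toCirc
  | .lam τ a => .lam τ a.toCirc
  | .fix σ τ a => .fix σ τ a.toCirc
  | .app a b => .app a.toCirc b.toCirc
  | .newref τ a => .newref τ a.toCirc
  | .deref a => .deref a.toCirc
  | .assign a b => .assign a.toCirc b.toCirc
  | .ifte a b c => .ifte a.toCirc b.toCirc c.toCirc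
  | .arith op a b => .arith op a.toCirc b.toCirc
  | .cmp op a b => .cmp op a.toCirc b.toCirc
  | .refeq a b => .refeq a.toCirc b.toCirc
  | .callcc τ a => .callcc τ a.toCirc
  | .throw τ a b => .throw τ a.toCirc b.toCirc
  | t => t

def Heap.toCirc (h : Heap) : Heap := fun ℓ => (h ℓ).map Tm.toCirc

/-- (A⃗ᵢ, γ⃗ᵢ) ∈ AVal(γ)(Γ): componentwise decomposition of γ_◦ with mutually
disjoint names avoiding errn -/
def CtxDecomp (γ : List Tm) (Γ : TyCtx) (As : List AVal) (γs : List FEnv) : Prop :=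
  γ.length = Γ.length ∧ As.length = Γ.length ∧ γs.length = Γ.length ∧
  List.Forall₂ (fun (p : Tm × Ty) (q : AVal × FEnv) => Decomp p.1.toCirc p.2 q.1 q.2)
    (γ.zip Γ) (As.zip γs) ∧
  List.Pairwise (fun A B => A.names ∩ B.names = ∅) As ∧
  (∀ A ∈ As, Name.fn errn ∉ A.names) ∧
  (∀ A ∈ As, A.linear)

def stackF (γs : List FEnv) : FEnv := fun f => γs.foldr (fun ρ acc => (ρ f) <|> acc) none

/-- the context configuration C_{h,K,γ}^{γ⃗ᵢ,c} -/
def cfgCtx (h : Heap) (K : Tm) (As : List AVal) (γs : List FEnv) (c : CName) (τ' : Ty) : Cfg :=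
  .pas ⟨stackF γs,
        Function.update (fun _ => none : KEnv) c (some K.toCirc),
        Function.update (fun _ => none : XiEnv) c (some (some (tern τ'))),
        {n | ∃ A ∈ As, n ∈ A.names} ∪ {Name.cn c} ∪ circNames ∪ {Name.fn errn},
        Heap.toCirc h, emptyF, Set.univ, none⟩

/-- the passive configuration of the definability lemmas:
⟨γ_◦ · [c ↦ K_◦], {c ↦ tern_{τ'}}, φ ⊎ {c} ⊎ ◦ ⊎ {errn}, h_◦⟩ -/
def cfgDef (h : Heap) (K : Tm) (γ : FEnv) (c : CName) (τ' : Ty) (φ : Set Name) : Cfg :=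
  .pas ⟨(fun f => (γ f).map Tm.toCirc),
        Function.update (fun _ => none : KEnv) c (some K.toCirc),
        Function.update (fun _ => none : XiEnv) c (some (some (tern τ'))),
        φ ∪ {Name.cn c} ∪ circNames ∪ {Name.fn errn},
        Heap.toCirc h, emptyF, Set.univ, none⟩

/-! ## Name permutations -/

structure NPerm where
  pf : Equiv.Perm FName
  pc : Equiv.Perm CName
  tpf : ∀ f : FName, (pf f).dom = f.dom ∧ (pf f).cod = f.cod
  tpc : ∀ c : CName, (pc c).ty = c.ty

def NPerm.name (π : NPerm) : Name → Name
  | .fn f => .fn (π.pf f)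
  | .cn c => .cn (π.pc c)

def NPerm.fixes (π : NPerm) (X : Set Name) : Prop := ∀ n ∈ X, π.name n = n

def AVal.rename (π : NPerm) : AVal → AVal
  | .fn f => .fn (π.pf f)
  | .pair a b => .pair (a.rename π) (b.rename π)
  | a => a

def Act.rename (π : NPerm) : Act → Act
  | .pa c A => .pa (π.pc c) (A.rename π)
  | .pq f A c => .pq (π.pf f) (A.rename π) (π.pc c)
  | .oa c A => .oa (π.pc c) (A.rename π)
  | .oq f A c => .oq (π.pf f) (A.rename π) (π.pc c)

/-! ## Visibility -/

/-- the set Vis_P(t) of P-visible names of an odd-length (◦⊎{errn}, φ⊎{c})-trace -/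
inductive VisP (φ : Set Name) (c : CName) : List Act → Set Name → Prop
  | ansInit (t : List Act) (A : AVal) :
      VisP φ c (t ++ [.oa c A]) ({Name.fn errn} ∪ circNames ∪ A.names)
  | ansJust {t t' : List Act} {S : Set Name} (f : FName) (A'' : AVal) (c' : CName) (A' : AVal) :
      VisP φ c t S → c' ≠ c →
      VisP φ c (t ++ [.pq f A'' c'] ++ t' ++ [.oa c' A']) (S ∪ A'.names)
  | qInit (t : List Act) (f' : FName) (A' : AVal) (c' : CName) : Name.fn f' ∈ φ →
      VisP φ c (t ++ [.oq f' A' c']) ({Name.fn errn} ∪ circNames ∪ A'.names ∪ {Name.cn c'})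
  | qJustQ {t t' : List Act} {S : Set Name} (f'' : FName) (A'' : AVal) (c'' : CName)
      (f' : FName) (A' : AVal) (c' : CName) :
      VisP φ c t S → Name.fn f' ∈ A''.names →
      VisP φ c (t ++ [.pq f'' A'' c''] ++ t' ++ [.oq f' A' c']) (S ∪ A'.names ∪ {Name.cn c'})
  | qJustA {t t' : List Act} {S : Set Name} (c'' : CName) (A'' : AVal)
      (f' : FName) (A' : AVal) (c' : CName) :
      VisP φ c t S → Name.fn f' ∈ A''.names →
      VisP φ c (t ++ [.pa c'' A''] ++ t' ++ [.oq f' A' c']) (S ∪ A'.names ∪ {Name.cn c'})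

/-- P-visibility of a (◦⊎{errn}, φ⊎{c})-trace -/
def PVisible (φ : Set Name) (c : CName) (t : List Act) : Prop :=
  (∀ pre f A d, pre ++ [Act.pq f A d] <+: t → Even (pre.length + 1) →
      ∃ S, VisP φ c pre S ∧ Name.fn f ∈ S) ∧
  (∀ pre d A, pre ++ [Act.pa d A] <+: t → Even (pre.length + 1) →
      ∃ S, VisP φ c pre S ∧ Name.cn d ∈ S)

/-- the set Vis_O(t) of O-visible names of an odd-length (φ⊎{c}, ∅)-trace -/
inductive VisO (φ : Set Name) (c : CName) : List Act → Set Name → Prop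
  | ansInit (t : List Act) (A : AVal) :
      VisO φ c (t ++ [.pa c A]) A.names
  | ansJust {t t' : List Act} {S : Set Name} (f : FName) (A'' : AVal) (c' : CName) (A' : AVal) :
      VisO φ c t S → c' ≠ c →
      VisO φ c (t ++ [.oq f A'' c'] ++ t' ++ [.pa c' A']) (S ∪ A'.names)
  | qInit (t : List Act) (f' : FName) (A' : AVal) (c' : CName) : Name.fn f' ∈ φ →
      VisO φ c (t ++ [.pq f' A' c']) (A'.names ∪ {Name.cn c'})
  | qJustQ {t t' : List Act} {S : Set Name} (f'' : FName) (A'' : AVal) (c'' : CName)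
      (f' : FName) (A' : AVal) (c' : CName) :
      VisO φ c t S → Name.fn f' ∈ A''.names →
      VisO φ c (t ++ [.oq f'' A'' c''] ++ t' ++ [.pq f' A' c']) (S ∪ A'.names ∪ {Name.cn c'})
  | qJustA {t t' : List Act} {S : Set Name} (c'' : CName) (A'' : AVal)
      (f' : FName) (A' : AVal) (c' : CName) :
      VisO φ c t S → Name.fn f' ∈ A''.names →
      VisO φ c (t ++ [.oa c'' A''] ++ t' ++ [.pq f' A' c']) (S ∪ A'.names ∪ {Name.cn c'})

/-- O-visibility of a (φ⊎{c}, ∅)-trace -/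
def OVisible (φ : Set Name) (c : CName) (t : List Act) : Prop :=
  (∀ pre f A d, pre ++ [Act.oq f A d] <+: t → Even (pre.length + 1) →
      ∃ S, VisO φ c pre S ∧ Name.fn f ∈ S) ∧
  (∀ pre d A, pre ++ [Act.oa d A] <+: t → Even (pre.length + 1) →
      ∃ S, VisO φ c pre S ∧ Name.cn d ∈ S)

/-! ## Bracketing -/

/-- top_P(t) for odd-length ({◦_{τ'},errn}, φ⊎{c})-traces -/
inductive TopP (c : CName) (τ' : Ty) : List Act → Option CName → Prop
  | ansInit (t : List Act) (A : AVal) : TopP c τ' (t ++ [.oa c A]) (some (tern τ'))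
  | ansJust {t₁ t₂ : List Act} {r : Option CName} (f : FName) (A'' : AVal) (c' : CName)
      (A' : AVal) :
      TopP c τ' t₁ r → TopP c τ' (t₁ ++ [.pq f A'' c'] ++ t₂ ++ [.oa c' A']) r
  | quest (t : List Act) (f : FName) (A' : AVal) (c' : CName) :
      TopP c τ' (t ++ [.oq f A' c']) (some c')

/-- P-bracketing: each P-answer answers the current top continuation -/
def PBracketed (c : CName) (τ' : Ty) (t : List Act) : Prop :=
  ∀ pre d A, pre ++ [Act.pa d A] <+: t → ∃ r, TopP c τ' pre r ∧ r = some d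

/-- top_O(t) for odd-length (φ⊎{c}, ∅)-traces; `none` is ⊥ -/
inductive TopO (c : CName) : List Act → Option CName → Prop
  | ansInit (t : List Act) (A : AVal) : TopO c (t ++ [.pa c A]) none
  | ansJust {t₁ t₂ : List Act} {r : Option CName} (f : FName) (A'' : AVal) (c' : CName)
      (A' : AVal) :
      TopO c t₁ r → TopO c (t₁ ++ [.oq f A'' c'] ++ t₂ ++ [.pa c' A']) r
  | quest (t : List Act) (f : FName) (A' : AVal) (c' : CName) :
      TopO c (t ++ [.pq f A' c']) (some c')

/-- O-bracketing: each O-answer answers the current top continuation -/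
def OBracketed (c : CName) (t : List Act) : Prop :=
  ∀ pre d A, pre ++ [Act.oa d A] <+: t → TopO c pre (some d)

/-- complete traces -/
def CompleteTr (c : CName) (t : List Act) : Prop :=
  Odd t.length ∧ OBracketed c t ∧ TopO c t none

/-- trace inclusion restricted to complete traces -/
def TrIncC (S₁ S₂ : Set ((List AVal × CName) × List Act)) : Prop :=
  ∀ p ∈ S₁, CompleteTr p.1.2 p.2 → p ∈ S₂

/-! ### Auxiliary development for Statement 16 -/

/-- continuation names occurring in a term (inside contE constants) -/
def Tm.cns : Tm → Set CName
  | .pair a b => a.cns ∪ b.cns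
  | .fst a => a.cns
  | .snd a => a.cns
  | .lam _ a => a.cns
  | .fix _ _ a => a.cns
  | .app a b => a.cns ∪ b.cns
  | .newref _ a => a.cns
  | .deref a => a.cns
  | .assign a b => a.cns ∪ b.cns
  | .ifte a b c => a.cns ∪ b.cns ∪ c.cns
  | .arith _ a b => a.cns ∪ b.cns
  | .cmp _ a b => a.cns ∪ b.cns
  | .refeq a b => a.cns ∪ b.cns
  | .callcc _ a => a.cns
  | .throw _ a b => a.cns ∪ b.cns
  | .contV _ _ K => K.cns
  | .contE _ K c => insert c K.cns
  | _ => ∅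

set_option maxHeartbeats 4000000 in
set_option tactic.hygienic false in
lemma cns_subst (M : Tm) : ∀ (k : ℕ) (V : Tm) (d : CName),
    d ∈ (M.subst k V).cns → d ∈ M.cns ∨ d ∈ V.cns := by
  induction M <;> intro k V d hd <;>
    simp only [Tm.subst, Tm.cns, Set.mem_union, Set.mem_insert_iff,
      Set.mem_empty_iff_false] at hd ⊢
  case bvar =>
    split at hd
    · tauto
    · split at hd <;> simp [Tm.cns] at hd
  all_goals
    (try have h1 := a_ih k V d)
    (try have h1' := a_ih (k+1) V d)
    (try have h1'' := a_ih (k+2) V d)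
    (try have h2 := a_ih_1 k V d)
    (try have h2' := a_ih_1 (k+1) V d)
    (try have h3 := a_ih_2 k V d)
    simp -failIfUnchanged only [Tm.cns, Set.mem_union, Set.mem_insert_iff, Set.mem_empty_iff_false] at *
    tauto

set_option tactic.hygienic false in
lemma cns_fill (K : Tm) : ∀ (X : Tm) (d : CName),
    d ∈ (K.fill X).cns → d ∈ K.cns ∨ d ∈ X.cns := by
  induction K <;> intro X d hd <;>
    simp only [Tm.fill, Tm.cns, Set.mem_union, Set.mem_insert_iff,
      Set.mem_empty_iff_false] at hd ⊢ <;>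
    (try have h1 := a_ih X d) <;> (try have h2 := a_ih_1 X d) <;>
    (try have h3 := a_ih_2 X d) <;>
    (try simp only [Tm.cns, Set.mem_union, Set.mem_insert_iff,
      Set.mem_empty_iff_false] at *) <;>
    tauto

set_option tactic.hygienic false in
lemma cns_le_fill (K : Tm) : ∀ (X : Tm) (d : CName),
    d ∈ K.cns → d ∈ (K.fill X).cns := by
  induction K <;> intro X d hd <;>
    simp only [Tm.fill, Tm.cns, Set.mem_union, Set.mem_insert_iff,
      Set.mem_empty_iff_false] at hd ⊢ <;>
    (try have h1 := a_ih X d) <;> (try have h2 := a_ih_1 X d) <;>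
    (try have h3 := a_ih_2 X d) <;>
    (try simp only [Tm.cns, Set.mem_union, Set.mem_insert_iff,
      Set.mem_empty_iff_false] at *) <;>
    tauto

set_option tactic.hygienic false in
lemma cns_redex {K : Tm} (hK : IsECtx K) : ∀ (X : Tm) (d : CName),
    d ∈ X.cns → d ∈ (K.fill X).cns := by
  induction hK <;> intro X d hd <;> simp_all [Tm.fill, Tm.cns] <;>
    (try have h1 := a_ih X d) <;> tauto

lemma cns_toTm (A : AVal) : (AVal.toTm A).cns = ∅ := by
  induction A <;> simp_all [AVal.toTm, Tm.cns]

lemma cns_ofBool (b : Bool) : (Tm.ofBool b).cns = ∅ := by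
  cases b <;> simp [Tm.ofBool, Tm.cns]

lemma decomp_cns {V : Tm} {τ : Ty} {A : AVal} {g : FEnv} (hD : Decomp V τ A g) :
    ∀ f W, g f = some W → ∀ d, d ∈ W.cns → d ∈ V.cns := by
  induction hD with
  | unit => intro f W h; simp at h
  | tt => intro f W h; simp at h
  | ff => intro f W h; simp at h
  | int n => intro f W h; simp at h
  | fn hV =>
      rename_i V f
      intro f' W h d hd
      by_cases hf : f' = f
      · subst hf; simp [Function.update] at h; subst h; exact hd
      · simp [Function.update, hf] at h
  | pair ha hb hdisj iha ihb =>
      intro f W h d hd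
      rcases (Option.orElse_eq_some _ _ _).mp h with h' | ⟨_, h'⟩
      · exact Set.mem_union_left _ (iha f W h' d hd)
      · exact Set.mem_union_right _ (ihb f W h' d hd)

lemma cns_msubst : ∀ (l : List Tm) (M : Tm) (d : CName),
    d ∈ (Tm.msubst M l).cns → d ∈ M.cns ∨ ∃ V ∈ l, d ∈ V.cns := by
  intro l
  induction l with
  | nil => intro M d hd; exact Or.inl hd
  | cons V l ih =>
      intro M d hd
      have : Tm.msubst M (V :: l) = Tm.msubst (M.subst 0 V) l := rfl
      rw [this] at hd
      rcases ih _ d hd with h | ⟨W, hW, hd'⟩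
      · rcases cns_subst M 0 V d h with h' | h'
        · exact Or.inl h'
        · exact Or.inr ⟨V, by simp, h'⟩
      · exact Or.inr ⟨W, by simp [hW], hd'⟩

set_option tactic.hygienic false in
lemma cns_of_contE_free : ∀ {M : Tm}, (∀ τ K c, Tm.contE τ K c ∉ M.subterms) →
    ∀ d, d ∉ M.cns := by
  intro M
  induction M <;> intro h d hd <;> simp_all [Tm.cns, Tm.subterms] <;>
    (try have h1 := @a_ih) <;> (try have h2 := @a_ih_1) <;> (try have h3 := @a_ih_2) <;>
    tauto

/-! ### snoc lemmas -/

lemma snoc_inj {l₁ l₂ : List Act} {a b : Act} (h : l₁ ++ [a] = l₂ ++ [b]) :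
    l₁ = l₂ ∧ a = b := by
  have h2 := List.append_inj' h rfl
  exact ⟨h2.1, by simpa using h2.2⟩

lemma snoc_eq_split {t s1 s2 : List Act} {x y : Act} (h : t ++ [x] = s1 ++ [y] ++ s2) :
    (t = s1 ∧ x = y ∧ s2 = []) ∨ ∃ s2', s2 = s2' ++ [x] ∧ t = s1 ++ [y] ++ s2' := by
  rcases List.eq_nil_or_concat s2 with rfl | ⟨s2', z, rfl⟩
  · have h2 := snoc_inj (l₂ := s1) (b := y) (by simpa using h)
    exact Or.inl ⟨h2.1, h2.2, rfl⟩
  · have h' : t ++ [x] = (s1 ++ [y] ++ s2') ++ [z] := by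
      simpa [List.append_assoc] using h
    have h2 := snoc_inj h'
    exact Or.inr ⟨s2', by rw [h2.2, List.concat_eq_append], h2.1⟩

/-! ### CInv : the invariant for a single continuation name -/

/-- `CInv c0 t r d` : answering `d` right now would have top continuation `r`. -/
def CInv (c0 : CName) (t : List Act) (r : Option CName) (d : CName) : Prop :=
  (d = c0 ∧ r = none) ∨ ∃ t1 f A s, t = t1 ++ [Act.oq f A d] ++ s ∧ TopO c0 t1 r

lemma CInv.mono {c0 t r d} (h : CInv c0 t r d) (s : List Act) : CInv c0 (t ++ s) r d := by
  rcases h with h | ⟨t1, f, A, s', rfl, hT⟩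
  · exact Or.inl h
  · exact Or.inr ⟨t1, f, A, s' ++ s, by simp, hT⟩

lemma CInv.topo {c0 t r d} (h : CInv c0 t r d) (A : AVal) :
    TopO c0 (t ++ [Act.pa d A]) r := by
  rcases h with ⟨rfl, rfl⟩ | ⟨t1, f, A', s, rfl, hT⟩
  · exact TopO.ansInit t A
  · have := TopO.ansJust (c := c0) (t₂ := s) f A' d A hT
    simpa [List.append_assoc] using this

/-- a name is `Good` if it is known to the environment-invariant -/
def Good (c0 : CName) (t : List Act) (xi : XiEnv) (phi : Set Name) (d : CName) : Prop :=
  Name.cn d ∈ phi ∧ CInv c0 t ((xi d).join) d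

lemma Good.mono {c0 t xi phi d} (h : Good c0 t xi phi d) {xi' : XiEnv} {phi' : Set Name}
    (s : List Act) (hphi : phi ⊆ phi') (hxi : ∀ e, Name.cn e ∈ phi → xi' e = xi e) :
    Good c0 (t ++ s) xi' phi' d :=
  ⟨hphi h.1, by rw [hxi d h.1]; exact h.2.mono s⟩

/-! ### The configuration invariant -/

structure EInv (c0 : CName) (t : List Act) (gf : FEnv) (gc : KEnv) (xi : XiEnv)
    (phi : Set Name) (h : Heap) : Prop where
  c0phi : Name.cn c0 ∈ phi
  u0 : (xi c0).join = none
  xiDom : ∀ d, xi d ≠ none → Name.cn d ∈ phi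
  gcDom : ∀ d, gc d ≠ none → Name.cn d ∈ phi
  xiOK : ∀ d e, gc d ≠ none → (xi d).join = some e → Good c0 t xi phi e
  gfG : ∀ f V, gf f = some V → ∀ d ∈ V.cns, Good c0 t xi phi d
  gcG : ∀ e K, gc e = some K → ∀ d ∈ K.cns, Good c0 t xi phi d
  hpG : ∀ ℓ V, h ℓ = some V → ∀ d ∈ V.cns, Good c0 t xi phi d
  uq : ∀ s1 f A d s2, t = s1 ++ [Act.oq f A d] ++ s2 →
        Name.cn d ∈ phi ∧ ∀ r, TopO c0 s1 r → r = (xi d).join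

def Inv (c0 : CName) (t : List Act) : Cfg → Prop
  | .act C =>
      EInv c0 t C.gf C.gc C.xi C.phi C.hp ∧ Good c0 t C.xi C.phi C.cur ∧
      ∀ d ∈ C.tm.cns, Good c0 t C.xi C.phi d
  | .pas P =>
      EInv c0 t P.gf P.gc P.xi P.phi P.hp ∧ TopO c0 t P.topc ∧
      ∀ r, TopO c0 t r → r = P.topc

/-- uniqueness of TopO for the current continuation, from the invariant -/
lemma uTop_pa {c0 : CName} {t : List Act} {gf gc xi phi h}
    (E : EInv c0 t gf gc xi phi h) (cu : CName) (A : AVal) :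
    ∀ r, TopO c0 (t ++ [Act.pa cu A]) r → r = (xi cu).join := by
  intro r hT
  generalize hE : t ++ [Act.pa cu A] = u at hT
  cases hT with
  | ansInit s B =>
      have h2 := snoc_inj hE
      have h3 := h2.2
      simp only [Act.pa.injEq] at h3
      rw [h3.1, E.u0]
  | ansJust f A'' c' A' hT1 =>
      rename_i t1 t2
      have heq' : t ++ [Act.pa cu A] = (t1 ++ [Act.oq f A'' c'] ++ t2) ++ [Act.pa c' A'] := by
        rw [hE]; try simp [List.append_assoc]
      have h2 := snoc_inj heq'
      have h3 := h2.2
      simp only [Act.pa.injEq] at h3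
      obtain ⟨hcu, -⟩ := h3
      subst hcu
      exact (E.uq t1 f A'' cu t2 h2.1).2 r hT1
  | quest s f A' c' =>
      have h2 := snoc_inj hE
      exact absurd h2.2 (by simp)

/-! ### continuation names along reductions -/

lemma redbase_cns {M : Tm} {h : Heap} {M' : Tm} {h' : Heap} (hB : RedBase M h M' h')
    (S : Set CName) (hM : ∀ d ∈ M.cns, d ∈ S)
    (hh : ∀ ℓ V, h ℓ = some V → ∀ d ∈ V.cns, d ∈ S) :
    (∀ d ∈ M'.cns, d ∈ S) ∧ (∀ ℓ V, h' ℓ = some V → ∀ d ∈ V.cns, d ∈ S) := by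
  cases hB with
  | beta hV =>
      refine ⟨?_, hh⟩
      intro d hd
      rcases cns_subst _ _ _ _ hd with h1 | h1 <;>
        exact hM d (by simp [Tm.cns]; tauto)
  | fixbeta hV =>
      refine ⟨?_, hh⟩
      intro d hd
      rcases cns_subst _ _ _ _ hd with h1 | h1
      · rcases cns_subst _ _ _ _ h1 with h2 | h2 <;>
          exact hM d (by simp [Tm.cns]; tauto)
      · exact hM d (by simp [Tm.cns] at h1 ⊢; tauto)
  | fst hv1 hv2 => exact ⟨fun d hd => hM d (by simp [Tm.cns]; tauto), hh⟩
  | snd hv1 hv2 => exact ⟨fun d hd => hM d (by simp [Tm.cns]; tauto), hh⟩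
  | iftt => exact ⟨fun d hd => hM d (by simp [Tm.cns]; tauto), hh⟩
  | ifff => exact ⟨fun d hd => hM d (by simp [Tm.cns]; tauto), hh⟩
  | arith => exact ⟨fun d hd => by simp [Tm.cns] at hd, hh⟩
  | cmp => exact ⟨fun d hd => by rw [cns_ofBool] at hd; exact absurd hd (by simp), hh⟩
  | refeq => exact ⟨fun d hd => by rw [cns_ofBool] at hd; exact absurd hd (by simp), hh⟩
  | deref hread => exact ⟨fun d hd => hh _ _ hread d hd, hh⟩
  | @newref τ V ℓ h0 hV hnone =>
      constructor
      · intro d hd; simp [Tm.cns] at hd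
      · intro ℓ' V' hV' d hd
        by_cases hl : ℓ' = ℓ
        · subst hl
          simp [Heap.upd] at hV'
          subst hV'
          exact hM d (by simpa [Tm.cns] using hd)
        · rw [Heap.upd] at hV'
          rw [if_neg hl] at hV'
          exact hh _ _ hV' d hd
  | @assign ℓ V h0 hV hne =>
      constructor
      · intro d hd; simp [Tm.cns] at hd
      · intro ℓ' V' hV' d hd
        by_cases hl : ℓ' = ℓ
        · subst hl
          simp [Heap.upd] at hV'
          subst hV'
          exact hM d (by simp [Tm.cns]; tauto)
        · rw [Heap.upd] at hV'
          rw [if_neg hl] at hV'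
          exact hh _ _ hV' d hd

lemma ered_cns {M : Tm} {c : CName} {h : Heap} {N : Tm} {c' : CName} {h' : Heap}
    (hR : ERed M c h N c' h') (S : Set CName)
    (hM : ∀ d ∈ M.cns, d ∈ S) (hc : c ∈ S)
    (hh : ∀ ℓ V, h ℓ = some V → ∀ d ∈ V.cns, d ∈ S) :
    (∀ d ∈ N.cns, d ∈ S) ∧ c' ∈ S ∧ (∀ ℓ V, h' ℓ = some V → ∀ d ∈ V.cns, d ∈ S) := by
  cases hR with
  | @base K Mr Mr' cc h0 h1 hK hB =>
      have hMr : ∀ d ∈ Mr.cns, d ∈ S := fun d hd => hM d (cns_redex hK _ _ hd)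
      have hKc : ∀ d ∈ K.cns, d ∈ S := fun d hd => hM d (cns_le_fill _ _ _ hd)
      obtain ⟨h1, h2⟩ := redbase_cns hB S hMr hh
      refine ⟨?_, hc, h2⟩
      intro d hd
      rcases cns_fill _ _ _ hd with h3 | h3
      · exact hKc d h3
      · exact h1 d h3
  | @callcc τ K M0 cc h0 hK =>
      have hKc : ∀ d ∈ K.cns, d ∈ S := fun d hd => hM d (cns_le_fill _ _ _ hd)
      have hM0 : ∀ d ∈ M0.cns, d ∈ S := fun d hd =>
        hM d (cns_redex hK _ _ (by simpa [Tm.cns] using hd))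
      refine ⟨?_, hc, hh⟩
      intro d hd
      rcases cns_fill _ _ _ hd with h3 | h3
      · exact hKc d h3
      · rcases cns_subst _ _ _ _ h3 with h4 | h4
        · exact hM0 d h4
        · simp [Tm.cns] at h4
          rcases h4 with rfl | h4
          · exact hc
          · exact hKc d h4
  | @throw τ σ K K' V cc cd h0 hK hK' hV =>
      have hRed : ∀ d ∈ (Tm.throw τ V (Tm.contE σ K' c')).cns, d ∈ S := fun d hd =>
        hM d (cns_redex hK _ _ hd)
      have hVc : ∀ d ∈ V.cns, d ∈ S := fun d hd => hRed d (by simp [Tm.cns]; tauto)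
      have hKc' : ∀ d ∈ K'.cns, d ∈ S := fun d hd => hRed d (by simp [Tm.cns]; tauto)
      have hcd : c' ∈ S := hRed c' (by simp [Tm.cns])
      refine ⟨?_, hcd, hh⟩
      intro d hd
      rcases cns_fill _ _ _ hd with h3 | h3
      · exact hKc' d h3
      · exact hVc d h3

/-! ### invariant preservation -/

lemma uTop_pq {c0 : CName} {t : List Act} {f : FName} {A : AVal} {c' : CName} :
    ∀ r, TopO c0 (t ++ [Act.pq f A c']) r → r = some c' := by
  intro r hT
  generalize hE : t ++ [Act.pq f A c'] = u at hT
  cases hT with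
  | ansInit s B => exact absurd (snoc_inj hE).2 (by simp)
  | ansJust f1 A1 c1 A2 hT1 =>
      rename_i t1 t2
      have heq' : t ++ [Act.pq f A c'] = (t1 ++ [Act.oq f1 A1 c1] ++ t2) ++ [Act.pa c1 A2] := by
        rw [hE]; try simp [List.append_assoc]
      exact absurd (snoc_inj heq').2 (by simp)
  | quest s f1 A1 c1 =>
      have h2 := (snoc_inj hE).2
      simp only [Act.pq.injEq] at h2
      rw [h2.2.2]

lemma uq_transport {c0 : CName} {t : List Act} {gf gc xi phi h}
    (E : EInv c0 t gf gc xi phi h) (x : Act) (hx : ∀ f A d, x ≠ Act.oq f A d)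
    {xi' : XiEnv} {phi' : Set Name} (hphi : phi ⊆ phi')
    (hxi : ∀ e, Name.cn e ∈ phi → xi' e = xi e) :
    ∀ s1 f A d s2, t ++ [x] = s1 ++ [Act.oq f A d] ++ s2 →
        Name.cn d ∈ phi' ∧ ∀ r, TopO c0 s1 r → r = (xi' d).join := by
  intro s1 f A d s2 heq
  rcases snoc_eq_split heq with ⟨rfl, hxy, rfl⟩ | ⟨s2', rfl, ht⟩
  · exact absurd hxy (hx f A d)
  · obtain ⟨h1, h2⟩ := E.uq s1 f A d s2' ht
    exact ⟨hphi h1, fun r hT => by rw [hxi d h1]; exact h2 r hT⟩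

lemma step_inv_tau {b : Bool} {c0 : CName} {t : List Act} {C C' : Cfg}
    (hS : Step false b C none C') (hI : Inv c0 t C) : Inv c0 t C' := by
  cases hS with
  | @tau M N cc cc' gf gc xi phi h h' F hR =>
      obtain ⟨E, Gcur, tmG⟩ := hI
      obtain ⟨hN, hc', hh'⟩ :=
        ered_cns hR {d | Good c0 t xi phi d} tmG Gcur E.hpG
      exact ⟨⟨E.c0phi, E.u0, E.xiDom, E.gcDom, E.xiOK, E.gfG, E.gcG, hh', E.uq⟩, hc', hN⟩

lemma step_inv_act {b : Bool} {c0 : CName} {t : List Act} {C C' : Cfg} {x : Act}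
    (hS : Step false b C (some x) C') (hI : Inv c0 t C) : Inv c0 (t ++ [x]) C' := by
  cases hS with
  | @pa V cu A g' gf gc xi phi h F hV hD hlin hdisj =>
      obtain ⟨E, Gcur, tmG⟩ := hI
      have hphi : phi ⊆ phi ∪ AVal.names A := Set.subset_union_left
      have hxi : ∀ e : CName, Name.cn e ∈ phi → xi e = xi e := fun _ _ => rfl
      have GM : ∀ d, Good c0 t xi phi d →
          Good c0 (t ++ [Act.pa cu A]) xi (phi ∪ AVal.names A) d :=
        fun d g => g.mono _ hphi hxi
      refine ⟨⟨hphi E.c0phi, E.u0, fun d hd => hphi (E.xiDom d hd),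
        fun d hd => hphi (E.gcDom d hd),
        fun d e h1 h2 => GM e (E.xiOK d e h1 h2),
        ?_, fun e K h1 d hd => GM d (E.gcG e K h1 d hd),
        fun ℓ W h1 d hd => GM d (E.hpG ℓ W h1 d hd),
        uq_transport E _ (by simp) hphi hxi⟩, ?_, ?_⟩
      · intro f W hW d hd
        rcases (Option.orElse_eq_some _ _ _).mp hW with h1 | ⟨_, h1⟩
        · exact GM d (E.gfG f W h1 d hd)
        · exact GM d (tmG d (decomp_cns hD f W h1 d hd))
      · exact Gcur.2.topo A
      · exact uTop_pa E cu A
  | @pq K V f A cu c' g' gf gc xi phi h F hK hV hD hlin hty hdisj hni =>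
      obtain ⟨E, Gcur, tmG⟩ := hI
      show EInv c0 (t ++ [Act.pq f A c']) (joinF gf g') (Function.update gc c' (some K))
          (Function.update xi c' (some (some cu))) (phi ∪ AVal.names A ∪ {Name.cn c'}) h ∧
        TopO c0 (t ++ [Act.pq f A c']) (some c') ∧
        ∀ r, TopO c0 (t ++ [Act.pq f A c']) r → r = some c'
      have hfresh : Name.cn c' ∉ phi := by
        intro hin
        have hmem : Name.cn c' ∈ (AVal.names A ∪ {Name.cn c'}) ∩ phi :=
          ⟨Or.inr rfl, hin⟩
        rw [hdisj] at hmem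
        exact hmem
      have hphi : phi ⊆ phi ∪ AVal.names A ∪ {Name.cn c'} :=
        fun n hn => Set.mem_union_left _ (Set.mem_union_left _ hn)
      have hxi : ∀ e : CName, Name.cn e ∈ phi →
          Function.update xi c' (some (some cu)) e = xi e := by
        intro e he
        apply Function.update_of_ne
        rintro rfl; exact hfresh he
      have GM : ∀ d, Good c0 t xi phi d →
          Good c0 (t ++ [Act.pq f A c']) (Function.update xi c' (some (some cu)))
            (phi ∪ AVal.names A ∪ {Name.cn c'}) d :=
        fun d g => g.mono _ hphi hxi
      refine ⟨⟨hphi E.c0phi, ?_, ?_, ?_, ?_, ?_, ?_,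
        fun ℓ W h1 d hd => GM d (E.hpG ℓ W h1 d hd),
        uq_transport E _ (by simp) hphi hxi⟩, TopO.quest t f A c', uTop_pq⟩
      · rw [hxi c0 E.c0phi]; exact E.u0
      · intro d hd
        by_cases hdc : d = c'
        · subst hdc; exact Set.mem_union_right _ rfl
        · rw [Function.update_of_ne hdc] at hd
          exact hphi (E.xiDom d hd)
      · intro d hd
        by_cases hdc : d = c'
        · subst hdc; exact Set.mem_union_right _ rfl
        · rw [Function.update_of_ne hdc] at hd
          exact hphi (E.gcDom d hd)
      · intro d e h1 h2
        by_cases hdc : d = c'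
        · subst hdc
          rw [Function.update_self] at h2
          simp only [Option.join] at h2
          have : cu = e := by simpa using h2
          subst this
          exact GM cu Gcur
        · rw [Function.update_of_ne hdc] at h2
          rw [Function.update_of_ne hdc] at h1
          exact GM e (E.xiOK d e h1 h2)
      · intro f0 W hW d hd
        rcases (Option.orElse_eq_some _ _ _).mp hW with h1 | ⟨_, h1⟩
        · exact GM d (E.gfG f0 W h1 d hd)
        · refine GM d (tmG d ?_)
          exact cns_redex hK _ d (by simp [Tm.cns]; exact decomp_cns hD f0 W h1 d hd)
      · intro e K0 h1 d hd
        by_cases hec : e = c'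
        · subst hec
          rw [Function.update_self] at h1
          have hK0 : K0 = K := by injection h1 with h1'; exact h1'.symm
          subst hK0
          exact GM d (tmG d (cns_le_fill _ _ _ hd))
        · rw [Function.update_of_ne hec] at h1
          exact GM d (E.gcG e K0 h1 d hd)
  | @oq V f A d0 gf gc xi phi h F av tc hty hlin hcty hdisj hni hgf hvis =>
      obtain ⟨E, wTop, uTop⟩ := hI
      show EInv c0 (t ++ [Act.oq f A d0]) gf gc (Function.update xi d0 (some tc))
          (phi ∪ AVal.names A ∪ {Name.cn d0}) h ∧
        Good c0 (t ++ [Act.oq f A d0]) (Function.update xi d0 (some tc))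
          (phi ∪ AVal.names A ∪ {Name.cn d0}) d0 ∧
        ∀ d ∈ (Tm.app V (AVal.toTm A)).cns,
          Good c0 (t ++ [Act.oq f A d0]) (Function.update xi d0 (some tc))
            (phi ∪ AVal.names A ∪ {Name.cn d0}) d
      have hfresh : Name.cn d0 ∉ phi := by
        intro hin
        have hmem : Name.cn d0 ∈ (AVal.names A ∪ {Name.cn d0}) ∩ phi := ⟨Or.inr rfl, hin⟩
        rw [hdisj] at hmem
        exact hmem
      have hphi : phi ⊆ phi ∪ AVal.names A ∪ {Name.cn d0} :=
        fun n hn => Set.mem_union_left _ (Set.mem_union_left _ hn)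
      have hxi : ∀ e : CName, Name.cn e ∈ phi →
          Function.update xi d0 (some tc) e = xi e := by
        intro e he
        apply Function.update_of_ne
        rintro rfl; exact hfresh he
      have GM : ∀ d, Good c0 t xi phi d →
          Good c0 (t ++ [Act.oq f A d0]) (Function.update xi d0 (some tc))
            (phi ∪ AVal.names A ∪ {Name.cn d0}) d :=
        fun d g => g.mono _ hphi hxi
      refine ⟨⟨hphi E.c0phi, ?_, ?_, fun d hd => hphi (E.gcDom d hd), ?_,
        fun f0 W h1 d hd => GM d (E.gfG f0 W h1 d hd),
        fun e K h1 d hd => GM d (E.gcG e K h1 d hd),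
        fun ℓ W h1 d hd => GM d (E.hpG ℓ W h1 d hd), ?_⟩, ?_, ?_⟩
      · rw [hxi c0 E.c0phi]; exact E.u0
      · intro d hd
        by_cases hdc : d = d0
        · subst hdc; exact Set.mem_union_right _ rfl
        · rw [Function.update_of_ne hdc] at hd
          exact hphi (E.xiDom d hd)
      · intro d e h1 h2
        have hdc : d ≠ d0 := fun hh => hfresh (hh ▸ E.gcDom d h1)
        rw [Function.update_of_ne hdc] at h2
        exact GM e (E.xiOK d e h1 h2)
      · intro s1 f1 A1 d s2 heq
        rcases snoc_eq_split heq with ⟨rfl, hxy, rfl⟩ | ⟨s2', rfl, ht⟩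
        · simp only [Act.oq.injEq] at hxy
          obtain ⟨rfl, -, rfl⟩ : f = f1 ∧ A = A1 ∧ d0 = d := hxy
          refine ⟨Set.mem_union_right _ rfl, fun r hT => ?_⟩
          rw [Function.update_self]
          simp only [Option.join]
          simpa using uTop r hT
        · obtain ⟨h1, h2⟩ := E.uq s1 f1 A1 d s2' ht
          exact ⟨hphi h1, fun r hT => by rw [hxi d h1]; exact h2 r hT⟩
      · -- Good for the new current continuation d0
        refine ⟨Set.mem_union_right _ rfl, Or.inr ⟨t, f, A, [], by simp, ?_⟩⟩
        rw [Function.update_self]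
        simpa [Option.join] using wTop
      · intro d hd
        have hd' : d ∈ V.cns := by
          simpa [Tm.cns, cns_toTm] using hd
        exact GM d (E.gfG f V hgf d hd')
  | @oa K d e A gf gc xi phi h F av tc hty hlin hdisj hgc hxiE hvis hbra =>
      obtain ⟨E, wTop, uTop⟩ := hI
      show EInv c0 (t ++ [Act.oa d A]) gf gc xi (phi ∪ AVal.names A) h ∧
        Good c0 (t ++ [Act.oa d A]) xi (phi ∪ AVal.names A) e ∧
        ∀ d' ∈ (K.fill (AVal.toTm A)).cns,
          Good c0 (t ++ [Act.oa d A]) xi (phi ∪ AVal.names A) d'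
      have hphi : phi ⊆ phi ∪ AVal.names A := Set.subset_union_left
      have hxi : ∀ e' : CName, Name.cn e' ∈ phi → xi e' = xi e' := fun _ _ => rfl
      have GM : ∀ d', Good c0 t xi phi d' →
          Good c0 (t ++ [Act.oa d A]) xi (phi ∪ AVal.names A) d' :=
        fun d' g => g.mono _ hphi hxi
      refine ⟨⟨hphi E.c0phi, E.u0, fun d' hd => hphi (E.xiDom d' hd),
        fun d' hd => hphi (E.gcDom d' hd),
        fun d' e' h1 h2 => GM e' (E.xiOK d' e' h1 h2),
        fun f0 W h1 d' hd => GM d' (E.gfG f0 W h1 d' hd),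
        fun e' K0 h1 d' hd => GM d' (E.gcG e' K0 h1 d' hd),
        fun ℓ W h1 d' hd => GM d' (E.hpG ℓ W h1 d' hd),
        uq_transport E _ (by simp) hphi hxi⟩, ?_, ?_⟩
      · exact GM e (E.xiOK d e (by show gc d ≠ none; rw [hgc]; simp) (by show (xi d).join = some e; rw [hxiE]; rfl))
      · intro d' hd
        rcases cns_fill _ _ _ hd with h3 | h3
        · exact GM d' (E.gcG d K hgc d' h3)
        · rw [cns_toTm] at h3; exact absurd h3 (by simp)

/-! ### from HOS to HOSC : dropping the bracketing condition -/

lemma step_drop_bra {C C' : Cfg} {a : Option Act} (h : Step false true C a C') :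
    Step false false C a C' := by
  cases h with
  | tau hR => exact Step.tau hR
  | pa hV hD hlin hdisj => exact Step.pa hV hD hlin hdisj
  | pq hK hV hD hlin hty hdisj hni => exact Step.pq hK hV hD hlin hty hdisj hni
  | oa hty hlin hdisj hgc hxiE hvis hbra =>
      exact Step.oa hty hlin hdisj hgc hxiE (fun h => nomatch h) (fun h => nomatch h)
  | oq hty hlin hcty hdisj hni hgf hvis =>
      exact Step.oq hty hlin hcty hdisj hni hgf (fun h => nomatch h)

lemma steps_drop_bra {C C' : Cfg} {s : List Act} (h : Steps false true C s C') :
    Steps false false C s C' := by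
  induction h with
  | nil => exact Steps.nil
  | tau h1 _ ih => exact Steps.tau (step_drop_bra h1) ih
  | cons h1 _ ih => exact Steps.cons (step_drop_bra h1) ih

/-! ### traces of the HOS LTS are O-bracketed -/

lemma steps_obr {C C'' : Cfg} {s : List Act} (hS : Steps false true C s C'') :
    ∀ {c0 : CName} {t : List Act}, Inv c0 t C →
      ∀ pre d A, pre ++ [Act.oa d A] <+: s → TopO c0 (t ++ pre) (some d) := by
  induction hS with
  | nil =>
      intro c0 t hI pre d A hpre
      rcases hpre with ⟨r, hr⟩
      exact absurd hr (by simp)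
  | tau h1 _ ih => intro c0 t hI; exact ih (step_inv_tau h1 hI)
  | @cons C C' C''' a s' h1 _ ih =>
      intro c0 t hI pre d A hpre
      cases pre with
      | nil =>
          rcases hpre with ⟨r, hr⟩
          simp only [List.nil_append, List.cons_append, List.nil_append] at hr
          have ha : a = Act.oa d A := by
            have := hr
            injection this with h2 h3
            exact h2.symm
          subst ha
          cases h1 with
          | @oa K dd e A0 gf gc xi phi h F av tc hty hlin hdisj hgc hxiE hvis hbra =>
              obtain ⟨E, wTop, uTop⟩ := id hI
              have htc : tc = some d := hbra rfl
              rw [htc] at wTop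
              simpa using wTop
      | cons a0 pre' =>
          rcases hpre with ⟨r, hr⟩
          simp only [List.cons_append] at hr
          injection hr with h2 h3
          subst h2
          have hpre' : pre' ++ [Act.oa d A] <+: s' := ⟨r, h3⟩
          have := ih (step_inv_act h1 hI) pre' d A hpre'
          simpa [List.append_assoc] using this

/-! ### O-bracketed traces of the HOSC LTS are HOS traces -/

lemma steps_add_bra {C C'' : Cfg} {s : List Act} (hS : Steps false false C s C'') :
    ∀ {c0 : CName} {t : List Act}, Inv c0 t C →
      (∀ pre d A, pre ++ [Act.oa d A] <+: s → TopO c0 (t ++ pre) (some d)) →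
      Steps false true C s C'' := by
  induction hS with
  | nil => intro c0 t _ _; exact Steps.nil
  | tau h1 _ ih =>
      intro c0 t hI hbr
      exact Steps.tau
        (by cases h1 with | tau hR => exact Step.tau hR)
        (ih (step_inv_tau h1 hI) hbr)
  | @cons C C' C''' a s' h1 _ ih =>
      intro c0 t hI hbr
      have hbr' : ∀ pre d A, pre ++ [Act.oa d A] <+: s' →
          TopO c0 ((t ++ [a]) ++ pre) (some d) := by
        intro pre d A hp
        rcases hp with ⟨r, hr⟩
        have hp2 : (a :: pre) ++ [Act.oa d A] <+: a :: s' := ⟨r, by simp [hr]⟩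
        have h3 := hbr (a :: pre) d A hp2
        simpa [List.append_assoc] using h3
      cases h1 with
      | pa hV hD hlin hdisj =>
          refine Steps.cons (Step.pa hV hD hlin hdisj) ?_
          exact ih (step_inv_act (b := true) (Step.pa hV hD hlin hdisj) hI) hbr'
      | pq hK hV hD hlin hty hdisj hni =>
          refine Steps.cons (Step.pq hK hV hD hlin hty hdisj hni) ?_
          exact ih (step_inv_act (b := true) (Step.pq hK hV hD hlin hty hdisj hni) hI) hbr'
      | oq hty hlin hcty hdisj hni hgf hvis =>
          refine Steps.cons (Step.oq hty hlin hcty hdisj hni hgf (fun h => nomatch h)) ?_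
          exact ih (step_inv_act (b := true)
            (Step.oq hty hlin hcty hdisj hni hgf (fun h => nomatch h)) hI) hbr'
      | @oa K dd e A0 gf gc xi phi h F av tc hty hlin hdisj hgc hxiE hvis hbra =>
          obtain ⟨E, wTop, uTop⟩ := id hI
          have hT : TopO c0 t (some dd) := by
            have := hbr [] dd A0 ⟨s', by simp⟩
            simpa using this
          have htc : tc = some dd := (uTop (some dd) hT).symm
          have hstepT : Step false true
              (.pas ⟨gf, gc, xi, phi, h, F, av, tc⟩) (some (Act.oa dd A0))
              (.act ⟨K.fill A0.toTm, e, gf, gc, xi, phi ∪ A0.names, h,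
                extendF F A0.names av⟩) :=
            Step.oa hty hlin hdisj hgc hxiE (fun h => nomatch h) (fun _ => htc)
          exact Steps.cons hstepT (ih (step_inv_act hstepT hI) hbr')

/-! ### relating the two initial configurations -/

/-- the ξ environments agree except at c0, where both have trivial top -/
def XR (c0 : CName) (x y : XiEnv) : Prop :=
  (∀ d, d ≠ c0 → x d = y d) ∧ (x c0).join = none ∧ (y c0).join = none

lemma XR.join {c0 x y} (h : XR c0 x y) : ∀ d, (x d).join = (y d).join := by
  intro d
  by_cases hd : d = c0
  · subst hd; rw [h.2.1, h.2.2]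
  · rw [h.1 d hd]

lemma XR.update {c0 x y} (h : XR c0 x y) {d : CName} (hd : d ≠ c0) (v : Option (Option CName)) :
    XR c0 (Function.update x d v) (Function.update y d v) := by
  refine ⟨?_, ?_, ?_⟩
  · intro e he
    by_cases hed : e = d
    · subst hed; rw [Function.update_self, Function.update_self]
    · rw [Function.update_of_ne hed, Function.update_of_ne hed]; exact h.1 e he
  · rw [Function.update_of_ne (Ne.symm hd)]; exact h.2.1
  · rw [Function.update_of_ne (Ne.symm hd)]; exact h.2.2

def CR (c0 : CName) : Cfg → Cfg → Prop
  | .act C, .act D =>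
      C.tm = D.tm ∧ C.cur = D.cur ∧ C.gf = D.gf ∧ C.gc = D.gc ∧ XR c0 C.xi D.xi ∧
      C.phi = D.phi ∧ C.hp = D.hp ∧ C.Fm = D.Fm ∧ Name.cn c0 ∈ C.phi
  | .pas P, .pas Q =>
      P.gf = Q.gf ∧ P.gc = Q.gc ∧ XR c0 P.xi Q.xi ∧ P.phi = Q.phi ∧ P.hp = Q.hp ∧
      P.Fm = Q.Fm ∧ P.avail = Q.avail ∧ P.topc = Q.topc ∧ Name.cn c0 ∈ P.phi
  | _, _ => False

lemma step_cr {b : Bool} {c0 : CName} {C C' D : Cfg} {a : Option Act}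
    (hS : Step false b C a C') (hR : CR c0 C D) :
    ∃ D', Step false b D a D' ∧ CR c0 C' D' := by
  cases hS with
  | @tau M N cc cc' gf gc xi phi h h' F hRed =>
      cases D with
      | pas Q => exact absurd hR (by simp [CR])
      | act Dc =>
          obtain ⟨tm2, cu2, gf2, gc2, xi2, phi2, h2, F2⟩ := Dc
          obtain ⟨e1, e2, e3, e4, e5, e6, e7, e8, e9⟩ := hR
          cases e1; cases e2; cases e3; cases e4; cases e6; cases e7; cases e8
          exact ⟨_, Step.tau hRed, rfl, rfl, rfl, rfl, e5, rfl, rfl, rfl, e9⟩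
  | @pa V cu A g' gf gc xi phi h F hV hD hlin hdisj =>
      cases D with
      | pas Q => exact absurd hR (by simp [CR])
      | act Dc =>
          obtain ⟨tm2, cu2, gf2, gc2, xi2, phi2, h2, F2⟩ := Dc
          obtain ⟨e1, e2, e3, e4, e5, e6, e7, e8, e9⟩ := hR
          cases e1; cases e2; cases e3; cases e4; cases e6; cases e7; cases e8
          have e5' : XR c0 xi xi2 := e5
          exact ⟨_, Step.pa hV hD hlin hdisj,
            rfl, rfl, e5', rfl, rfl, rfl, rfl, e5'.join cu, Set.mem_union_left _ e9⟩
  | @pq K V f A cu c' g' gf gc xi phi h F hK hV hD hlin hty hdisj hni =>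
      cases D with
      | pas Q => exact absurd hR (by simp [CR])
      | act Dc =>
          obtain ⟨tm2, cu2, gf2, gc2, xi2, phi2, h2, F2⟩ := Dc
          obtain ⟨e1, e2, e3, e4, e5, e6, e7, e8, e9⟩ := hR
          cases e1; cases e2; cases e3; cases e4; cases e6; cases e7; cases e8
          have hfresh : Name.cn c' ∉ phi := by
            intro hin
            have hmem : Name.cn c' ∈ (AVal.names A ∪ {Name.cn c'}) ∩ phi := ⟨Or.inr rfl, hin⟩
            rw [hdisj] at hmem; exact hmem
          have hne : c' ≠ c0 := by
            rintro rfl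
            exact hfresh e9
          have e5' : XR c0 xi xi2 := e5
          exact ⟨_, Step.pq hK hV hD hlin hty hdisj hni,
            rfl, rfl, e5'.update hne _, rfl, rfl, rfl, rfl, rfl,
            Set.mem_union_left _ (Set.mem_union_left _ e9)⟩
  | @oa K dd e A gf gc xi phi h F av tc hty hlin hdisj hgc hxiE hvis hbra =>
      cases D with
      | act Dc => exact absurd hR (by simp [CR])
      | pas Q =>
          obtain ⟨gf2, gc2, xi2, phi2, h2, F2, av2, tc2⟩ := Q
          obtain ⟨e1, e2, e3, e4, e5, e6, e7, e8, e9⟩ := hR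
          cases e1; cases e2; cases e4; cases e5; cases e6; cases e7; cases e8
          have e3' : XR c0 xi xi2 := e3
          have hdd : dd ≠ c0 := by
            rintro rfl
            have h5 := e3'.2.1
            rw [hxiE] at h5
            simp at h5
          have hxiE2 : xi2 dd = some (some e) := by
            rw [← e3'.1 dd hdd]; exact hxiE
          exact ⟨_, Step.oa hty hlin hdisj hgc hxiE2 hvis hbra,
            rfl, rfl, rfl, rfl, e3', rfl, rfl, rfl, Set.mem_union_left _ e9⟩
  | @oq V f A d0 gf gc xi phi h F av tc hty hlin hcty hdisj hni hgf hvis =>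
      cases D with
      | act Dc => exact absurd hR (by simp [CR])
      | pas Q =>
          obtain ⟨gf2, gc2, xi2, phi2, h2, F2, av2, tc2⟩ := Q
          obtain ⟨e1, e2, e3, e4, e5, e6, e7, e8, e9⟩ := hR
          cases e1; cases e2; cases e4; cases e5; cases e6; cases e7; cases e8
          have hfresh : Name.cn d0 ∉ phi := by
            intro hin
            have hmem : Name.cn d0 ∈ (AVal.names A ∪ {Name.cn d0}) ∩ phi := ⟨Or.inr rfl, hin⟩
            rw [hdisj] at hmem; exact hmem
          have e3' : XR c0 xi xi2 := e3
          have hne : d0 ≠ c0 := by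
            rintro rfl
            exact hfresh e9
          exact ⟨_, Step.oq hty hlin hcty hdisj hni hgf hvis,
            rfl, rfl, rfl, rfl, e3'.update hne _, rfl, rfl, rfl,
            Set.mem_union_left _ (Set.mem_union_left _ e9)⟩

lemma steps_cr {b : Bool} {c0 : CName} {C C' : Cfg} {s : List Act}
    (hS : Steps false b C s C') : ∀ {D : Cfg}, CR c0 C D →
    ∃ D', Steps false b D s D' := by
  induction hS with
  | nil => intro D hR; exact ⟨D, Steps.nil⟩
  | tau h1 _ ih =>
      intro D hR
      obtain ⟨D', hD', hR'⟩ := step_cr h1 hR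
      obtain ⟨D'', hD''⟩ := ih hR'
      exact ⟨D'', Steps.tau hD' hD''⟩
  | cons h1 _ ih =>
      intro D hR
      obtain ⟨D', hD', hR'⟩ := step_cr h1 hR
      obtain ⟨D'', hD''⟩ := ih hR'
      exact ⟨D'', Steps.cons hD' hD''⟩

/-! ### the initial configurations -/

lemma inv_init {Γ : TyCtx} {τ : Ty} {M : Tm} (hM : CrFreeTm Γ M τ)
    (ρ : List AVal) (c : CName) : Inv c [] (cfgInitBra M ρ c) := by
  show EInv c [] (fun _ => none) (fun _ => none)
      (Function.update (fun _ => none : XiEnv) c (some none))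
      (assignNames ρ ∪ {Name.cn c}) Heap.empty ∧
    Good c [] (Function.update (fun _ => none : XiEnv) c (some none))
      (assignNames ρ ∪ {Name.cn c}) c ∧
    ∀ d ∈ (initTm M ρ).cns,
      Good c [] (Function.update (fun _ => none : XiEnv) c (some none))
        (assignNames ρ ∪ {Name.cn c}) d
  have hjoin : ((Function.update (fun _ => none : XiEnv) c (some none)) c).join = none := by
    rw [Function.update_self]; rfl
  refine ⟨⟨Set.mem_union_right _ rfl, hjoin, ?_, ?_, ?_, ?_, ?_, ?_, ?_⟩,
    ⟨Set.mem_union_right _ rfl, Or.inl ⟨rfl, hjoin⟩⟩, ?_⟩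
  · intro d hd
    by_cases hdc : d = c
    · subst hdc; exact Set.mem_union_right _ rfl
    · rw [Function.update_of_ne hdc] at hd
      exact absurd rfl hd
  · intro d hd; exact absurd rfl hd
  · intro d e h1 h2; exact absurd rfl h1
  · intro f V h1; exact absurd h1 (by simp)
  · intro e K h1; exact absurd h1 (by simp)
  · intro ℓ V h1; exact absurd h1 (by simp [Heap.empty])
  · intro s1 f A d s2 heq; exact absurd heq (by simp)
  · intro d hd
    exfalso
    rcases cns_msubst _ _ _ hd with h1 | ⟨V, hV, h1⟩
    · exact cns_of_contE_free hM.synt.2.1 d h1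
    · obtain ⟨B, hB, rfl⟩ := List.mem_map.mp hV
      rw [cns_toTm] at h1
      exact absurd h1 (by simp)

lemma xr_init (c : CName) :
    XR c (Function.update (fun _ => none : XiEnv) c (some none)) (fun _ => none) := by
  refine ⟨fun d hd => Function.update_of_ne hd _ _, ?_, rfl⟩
  rw [Function.update_self]; rfl

lemma cr_init1 (M : Tm) (ρ : List AVal) (c : CName) :
    CR c (cfgInitBra M ρ c) (cfgInit M ρ c) :=
  ⟨rfl, rfl, rfl, rfl, xr_init c, rfl, rfl, rfl, Set.mem_union_right _ rfl⟩

lemma cr_init2 (M : Tm) (ρ : List AVal) (c : CName) :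
    CR c (cfgInit M ρ c) (cfgInitBra M ρ c) := by
  refine ⟨rfl, rfl, rfl, rfl, ?_, rfl, rfl, rfl, Set.mem_union_right _ rfl⟩
  obtain ⟨x1, x2, x3⟩ := xr_init c
  exact ⟨fun d hd => (x1 d hd).symm, x3, x2⟩

/-- the HOS[HOSC] LTS generates exactly the O-bracketed traces of the
HOSC[HOSC] LTS: t ∈ Tr_HOS(C_{M,bra}^{ρ,c}) iff t ∈ Tr_HOSC(C_M^{ρ,c}) and t is
O-bracketed, for cr-free HOSC terms. -/
theorem hos_traces_are_obracketed_hosc_traces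
    (Γ : TyCtx) (τ : Ty) (M : Tm) (hM : CrFreeTm Γ M τ)
    (ρ : List AVal) (hρ : AssignTyped ρ Γ) (c : CName) (hc : c.ty = τ) (t : List Act) :
    t ∈ Traces false true (cfgInitBra M ρ c) ↔
      (t ∈ Traces false false (cfgInit M ρ c) ∧ OBracketed c t) := by
  constructor
  · rintro ⟨C', hs⟩
    refine ⟨?_, ?_⟩
    · have hs' := steps_drop_bra hs
      obtain ⟨D', hD'⟩ := steps_cr hs' (cr_init1 M ρ c)
      exact ⟨D', hD'⟩
    · intro pre d A hpre
      have h2 := steps_obr hs (inv_init hM ρ c) pre d A hpre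
      simpa using h2
  · rintro ⟨⟨D', hs⟩, hob⟩
    obtain ⟨D'', hs2⟩ := steps_cr hs (cr_init2 M ρ c)
    refine ⟨D'', steps_add_bra hs2 (inv_init hM ρ c) ?_⟩
    intro pre d A hpre
    simpa using hob pre d A hpre

end OGS
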